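/- Let a ∈ ℤ³ be primitive with framing basis (α₁,α₂,α₃), let x ∈ ℂ³ satisfy Im(α₂(x)/α₃(x)) > 0, let w ∈ ℂ, and let μ = m₁α₁+m₂α₂+m₃α₃ and ν = n₁α₁+n₂α₂+n₃α₃ be elements of ℤ³. Assume that θ₀((w'+jα₁(x))/α₃(x), α₂(x)/α₃(x)) ≠ 0 for w' ∈ {w, w+μ(x)} and every integer j with −|m₁|−|n₁| ≤ j ≤ |m₁|+|n₁| (so that all inverted factors are invertible). Then Δ_a(μ+ν; w, x) = e^{2πi·P_a(μ,ν;w,x)} · Δ_a(μ; w, x) · Δ_a(ν; w+μ(x), x), where P_a(μ,ν;w,x) = (n₁m₂/α₃(x)) · [ w + ((2m₁+n₁−1)/2)·α₁(x) + ((m₂−1)/2)·α₂(x) + (1/2)·α₃(x) ]. -/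

import Mathlib

namespace EGG

/-- Integer vectors in `ℤ³`. -/
abbrev V : Type := Fin 3 → ℤ

/-- gcd of the three coordinates. -/
def gcd3 (v : V) : ℕ := Nat.gcd (Nat.gcd (v 0).natAbs (v 1).natAbs) (v 2).natAbs

/-- A vector of `ℤ³` is primitive if it is nonzero and the gcd of its coordinates is 1. -/
def Primitive (a : V) : Prop := a ≠ 0 ∧ gcd3 a = 1

/-- Cross product of integer vectors. -/
def cross (a b : V) : V :=
  ![a 1 * b 2 - a 2 * b 1, a 2 * b 0 - a 0 * b 2, a 0 * b 1 - a 1 * b 0]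

/-- Dot product of integer vectors. -/
def dotZ (α a : V) : ℤ := α 0 * a 0 + α 1 * a 1 + α 2 * a 2

/-- Dot product of a rational vector with an integer vector. -/
def dotQ (α : Fin 3 → ℚ) (a : V) : ℚ := α 0 * (a 0 : ℚ) + α 1 * (a 1 : ℚ) + α 2 * (a 2 : ℚ)

/-- Dot product of a real vector with an integer vector. -/
def dotR (l : Fin 3 → ℝ) (a : V) : ℝ := l 0 * (a 0 : ℝ) + l 1 * (a 1 : ℝ) + l 2 * (a 2 : ℝ)

/-- The pairing `α(x) = α₁x₁+α₂x₂+α₃x₃` of a rational vector with a complex vector. -/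
noncomputable def pairQ (α : Fin 3 → ℚ) (x : Fin 3 → ℂ) : ℂ :=
  (α 0 : ℂ) * x 0 + (α 1 : ℂ) * x 1 + (α 2 : ℂ) * x 2

/-- The pairing `α(x) = α₁x₁+α₂x₂+α₃x₃` of an integer vector with a complex vector. -/
noncomputable def pairZ (α : V) (x : Fin 3 → ℂ) : ℂ :=
  (α 0 : ℂ) * x 0 + (α 1 : ℂ) * x 1 + (α 2 : ℂ) * x 2

/-- The canonical map `ℤ³ → ℚ³`. -/
def toQ (a : V) : Fin 3 → ℚ := fun i => (a i : ℚ)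

/-- Determinant of the 3×3 matrix with rows `α, β, δ`. -/
def det3Q (α β δ : Fin 3 → ℚ) : ℚ := Matrix.det (Matrix.of ![α, β, δ])

/-- `(α, β)` is an oriented basis of the plane `H(a) = {α : α·a = 0}`. -/
def IsOrientedBasis (a : V) (α β : Fin 3 → ℚ) : Prop :=
  dotQ α a = 0 ∧ dotQ β a = 0 ∧
  LinearIndependent ℚ ![α, β] ∧
  (∀ δ : Fin 3 → ℚ, dotQ δ a = 0 → ∃ p q : ℚ, δ = p • α + q • β) ∧
  (∀ δ : Fin 3 → ℚ, 0 < dotQ δ a → 0 < det3Q α β δ)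

/-- The domain `U⁺_a ⊆ ℂ³`. -/
noncomputable def UPlus (a : V) : Set (Fin 3 → ℂ) :=
  {x | ∃ α β : Fin 3 → ℚ, IsOrientedBasis a α β ∧
    0 < (pairQ α x * (starRingEnd ℂ) (pairQ β x)).im}

/-- `γ` is the direction vector of the wedge `(a,b)`: `γ` is primitive and
`a × b = s • γ` for some integer `s ≥ 1` (the modulus). -/
def IsDirVec (a b γ : V) : Prop :=
  Primitive γ ∧ ∃ s : ℤ, 1 ≤ s ∧ cross a b = s • γ

/-- `C₊₋(a,b) = {δ ∈ ℤ³ : δ·a > 0, δ·b ≤ 0}`. -/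
def Cpm (a b : V) : Set V := {δ | 0 < dotZ δ a ∧ dotZ δ b ≤ 0}

/-- `C₋₊(a,b) = {δ ∈ ℤ³ : δ·a ≤ 0, δ·b > 0}`. -/
def Cmp (a b : V) : Set V := {δ | dotZ δ a ≤ 0 ∧ 0 < dotZ δ b}

/-- The factor `1 - e^{-2πi(δ(x)-w)/γ(x)}` appearing in the numerator of `Γ_{a,b}`. -/
noncomputable def gammaFacP (γ : V) (x : Fin 3 → ℂ) (w : ℂ) (δ : V) : ℂ :=
  1 - Complex.exp (-(2 * (Real.pi : ℂ) * Complex.I) * (pairZ δ x - w) / pairZ γ x)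

/-- The factor `1 - e^{2πi(δ(x)-w)/γ(x)}` appearing in the denominator of `Γ_{a,b}`. -/
noncomputable def gammaFacM (γ : V) (x : Fin 3 → ℂ) (w : ℂ) (δ : V) : ℂ :=
  1 - Complex.exp ((2 * (Real.pi : ℂ) * Complex.I) * (pairZ δ x - w) / pairZ γ x)

/-- The gamma function `Γ_{a,b}(w,x)` of the wedge `(a,b)` with direction vector `γ`:
the products run over the sets `C₊₋(a,b)/ℤγ` and `C₋₊(a,b)/ℤγ`; each factor is evaluated
on the chosen representative `Quotient.out q` of the class `q` (the factors are constant
on classes modulo `ℤγ`). -/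
noncomputable def GammaWedge (a b γ : V) (w : ℂ) (x : Fin 3 → ℂ) : ℂ :=
  if a = b then 1 else
    (∏' q : (QuotientAddGroup.mk '' Cpm a b : Set (V ⧸ AddSubgroup.zmultiples γ)),
      gammaFacP γ x w (Quotient.out (q : V ⧸ AddSubgroup.zmultiples γ))) /
    (∏' q : (QuotientAddGroup.mk '' Cmp a b : Set (V ⧸ AddSubgroup.zmultiples γ)),
      gammaFacM γ x w (Quotient.out (q : V ⧸ AddSubgroup.zmultiples γ)))

/-- The theta function `θ₀(z,τ)`, for `Im τ > 0`. -/
noncomputable def theta0 (z τ : ℂ) : ℂ :=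
  ∏' j : ℕ, ((1 - Complex.exp (2 * (Real.pi : ℂ) * Complex.I * (((j : ℂ) + 1) * τ - z))) *
    (1 - Complex.exp (2 * (Real.pi : ℂ) * Complex.I * ((j : ℂ) * τ + z))))

/-- The elliptic gamma function `Γ(z,τ,σ)`, for `Im τ > 0` and `Im σ > 0`. -/
noncomputable def ellGamma (z τ σ : ℂ) : ℂ :=
  (∏' p : ℕ × ℕ, (1 - Complex.exp (2 * (Real.pi : ℂ) * Complex.I *
      (((p.1 : ℂ) + 1) * τ + ((p.2 : ℂ) + 1) * σ - z)))) /
  (∏' p : ℕ × ℕ, (1 - Complex.exp (2 * (Real.pi : ℂ) * Complex.I *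
      ((p.1 : ℂ) * τ + (p.2 : ℂ) * σ + z))))

/-- The elliptic gamma function `Γ̃(z,τ,σ)` in the domain `Im τ < 0 < Im σ`. -/
noncomputable def ellGammaTilde (z τ σ : ℂ) : ℂ :=
  (∏' p : ℕ × ℕ, (1 - Complex.exp (2 * (Real.pi : ℂ) * Complex.I *
      (z - ((p.1 : ℂ) + 1) * τ + (p.2 : ℂ) * σ)))) /
  (∏' p : ℕ × ℕ, (1 - Complex.exp (2 * (Real.pi : ℂ) * Complex.I *
      (-z - (p.1 : ℂ) * τ + ((p.2 : ℂ) + 1) * σ))))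

/-- The polynomial `P₂`. -/
noncomputable def P2 (w x₁ x₂ : ℂ) : ℂ :=
  (w ^ 2 - (x₁ + x₂) * w + (x₁ ^ 2 + x₂ ^ 2 + 3 * x₁ * x₂) / 6) / (x₁ * x₂)

/-- The Bernoulli polynomial `P₃ = B₃,₃`. -/
noncomputable def P3 (w x₁ x₂ x₃ : ℂ) : ℂ :=
  w ^ 3 / (x₁ * x₂ * x₃) - (3 * (x₁ + x₂ + x₃) / (2 * (x₁ * x₂ * x₃))) * w ^ 2
    + ((x₁ ^ 2 + x₂ ^ 2 + x₃ ^ 2 + 3 * x₁ * x₂ + 3 * x₂ * x₃ + 3 * x₁ * x₃)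
        / (2 * (x₁ * x₂ * x₃))) * w
    - (1 / 4) * (x₁ + x₂ + x₃) * (1 / x₁ + 1 / x₂ + 1 / x₃)

/-- The real polynomial `R₃ = B₂,₃`. -/
noncomputable def R3 (ζ t s : ℝ) : ℝ :=
  ζ ^ 3 / (t * s) - (3 / 2) * (1 / t + 1 / s) * ζ ^ 2
    + (t / (2 * s) + s / (2 * t) + 3 / 2) * ζ - (t + s) / 4

/-- The hermitian weight `h₂(z,τ)` for the theta bundle. -/
noncomputable def h2 (z τ : ℂ) : ℝ :=
  Real.exp (-2 * Real.pi * z.im ^ 2 / τ.im + 2 * Real.pi * (z - τ / 6).im)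

/-- The hermitian weight `h₃(z,τ,σ)`. -/
noncomputable def h3 (z τ σ : ℂ) : ℝ :=
  Real.exp (-(2 * Real.pi / 3) * R3 z.im τ.im σ.im)

/-- The finite product of theta functions `Δ` with parameters `A₁ = α₁(x)`, `A₂ = α₂(x)`,
`A₃ = α₃(x)` and first framing coordinate `m = μ(a)`:
`∏_{j=0}^{m-1} θ₀((w+jA₁)/A₃, A₂/A₃)` for `m ≥ 0` and
`(∏_{j=m}^{-1} θ₀((w+jA₁)/A₃, A₂/A₃))⁻¹` for `m < 0`. -/
noncomputable def DeltaInt (w A₁ A₂ A₃ : ℂ) (m : ℤ) : ℂ :=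
  if 0 ≤ m then
    ∏ j ∈ Finset.range m.toNat, theta0 ((w + (j : ℂ) * A₁) / A₃) (A₂ / A₃)
  else
    (∏ j ∈ Finset.range (-m).toNat, theta0 ((w - ((j : ℂ) + 1) * A₁) / A₃) (A₂ / A₃))⁻¹


/-- `(α₁,α₂,α₃)` is the framing basis at `a`: an oriented `ℤ`-basis of `ℤ³` (determinant 1)
with `α₁·a = 1` and `α₂·a = α₃·a = 0`. -/
def IsFraming (a α₁ α₂ α₃ : V) : Prop :=
  Matrix.det (Matrix.of ![α₁, α₂, α₃]) = 1 ∧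
  dotZ α₁ a = 1 ∧ dotZ α₂ a = 0 ∧ dotZ α₃ a = 0

section Statement8Aux

open Complex Filter

lemma hp_zero {f : ℕ → ℂ} (N : ℕ) (h : f N = 0) : HasProd f 0 := by
  unfold HasProd
  refine Filter.Tendsto.congr' ?_ tendsto_const_nhds
  filter_upwards [Filter.eventually_ge_atTop ({N} : Finset ℕ)] with s hs
  exact (Finset.prod_eq_zero (hs (Finset.mem_singleton_self N)) h).symm

lemma multipliable_geom {q : ℂ} (hq : ‖q‖ < 1) (c : ℂ) :
    Multipliable (fun j : ℕ => 1 - q ^ j * c) := by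
  by_cases h0 : ∃ N, 1 - q ^ N * c = 0
  · obtain ⟨N, hN⟩ := h0
    exact ⟨0, hp_zero N hN⟩
  · push_neg at h0
    have hlog : Summable (fun j : ℕ => Complex.log (1 - q ^ j * c)) := by
      apply Summable.of_norm_bounded_eventually_nat (g := fun j => 3/2 * (‖c‖ * ‖q‖^j))
      · exact ((summable_geometric_of_lt_one (norm_nonneg q) hq).mul_left _).mul_left _
      · have h2 : Filter.Tendsto (fun j : ℕ => ‖q‖ ^ j * ‖c‖) atTop (nhds 0) := by
          simpa using (tendsto_pow_atTop_nhds_zero_of_lt_one (norm_nonneg q) hq).mul_const ‖c‖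
        have h3 := h2.eventually_le_const (show (0:ℝ) < 1/2 by norm_num)
        filter_upwards [h3] with j hj
        have hb : ‖-(q ^ j * c)‖ ≤ 1/2 := by
          rw [norm_neg, norm_mul, norm_pow]; exact hj
        have hle : ‖Complex.log (1 + -(q ^ j * c))‖ ≤ 3/2 * ‖-(q ^ j * c)‖ :=
          Complex.norm_log_one_add_half_le_self hb
        calc ‖Complex.log (1 - q ^ j * c)‖
            = ‖Complex.log (1 + -(q ^ j * c))‖ := by rw [sub_eq_add_neg]
          _ ≤ 3/2 * ‖-(q ^ j * c)‖ := hle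
          _ = 3/2 * (‖c‖ * ‖q‖ ^ j) := by rw [norm_neg, norm_mul, norm_pow]; ring
    exact Complex.multipliable_of_summable_log hlog

lemma theta0_eq (z τ : ℂ) : theta0 z τ =
    ∏' j : ℕ, ((1 - (Complex.exp (2 * (Real.pi:ℂ) * I * τ)) ^ (j+1) * (Complex.exp (2 * (Real.pi:ℂ) * I * z))⁻¹) *
      (1 - (Complex.exp (2 * (Real.pi:ℂ) * I * τ)) ^ j * Complex.exp (2 * (Real.pi:ℂ) * I * z))) := by
  unfold theta0
  apply tprod_congr; intro j
  have h1 : 2 * (Real.pi:ℂ) * I * (((j:ℂ)+1) * τ - z)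
      = ((j+1 : ℕ) : ℂ) * (2 * (Real.pi:ℂ) * I * τ) + (-(2 * (Real.pi:ℂ) * I * z)) := by
    push_cast; ring
  have h2 : 2 * (Real.pi:ℂ) * I * ((j:ℂ) * τ + z)
      = ((j : ℕ) : ℂ) * (2 * (Real.pi:ℂ) * I * τ) + (2 * (Real.pi:ℂ) * I * z) := by
    ring
  rw [h1, h2, Complex.exp_add, Complex.exp_add, Complex.exp_nat_mul, Complex.exp_nat_mul,
    Complex.exp_neg]

lemma norm_q_lt_one {τ : ℂ} (hτ : 0 < τ.im) : ‖Complex.exp (2 * (Real.pi:ℂ) * I * τ)‖ < 1 := by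
  rw [Complex.norm_exp, Real.exp_lt_one_iff]
  have h : (2 * (Real.pi:ℂ) * I * τ).re = -(2 * Real.pi * τ.im) := by
    simp [Complex.mul_re, Complex.mul_im]
  rw [h]
  have := Real.pi_pos
  nlinarith

lemma qp_aux (q u : ℂ) (hqlt : ‖q‖ < 1) (hq0 : q ≠ 0) (hu0 : u ≠ 0) :
    (∏' j : ℕ, ((1 - q ^ (j+1) * (u * q)⁻¹) * (1 - q ^ j * (u * q)))) =
      -u⁻¹ * ∏' j : ℕ, ((1 - q ^ (j+1) * u⁻¹) * (1 - q ^ j * u)) := by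
  have hM : ∀ c : ℂ, Multipliable (fun j : ℕ => 1 - q ^ j * c) := multipliable_geom hqlt
  have hM' : ∀ c : ℂ, Multipliable (fun j : ℕ => 1 - q ^ (j+1) * c) := by
    intro c
    exact (hM (q * c)).congr (fun j => by rw [pow_succ]; ring)
  have e1 : (∏' j : ℕ, ((1 - q ^ (j+1) * u⁻¹) * (1 - q ^ j * u)))
      = (∏' j : ℕ, (1 - q ^ (j+1) * u⁻¹)) * ∏' j : ℕ, (1 - q ^ j * u) :=
    Multipliable.tprod_mul (hM' u⁻¹) (hM u)
  have e2 : (∏' j : ℕ, (1 - q ^ j * u)) = (1 - u) * ∏' j : ℕ, (1 - q ^ (j+1) * u) := by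
    rw [tprod_eq_zero_mul' (f := fun j : ℕ => 1 - q ^ j * u) (hM' u)]
    norm_num
  have c1 : ∀ j : ℕ, (1 - q ^ (j+1) * (u * q)⁻¹) = 1 - q ^ j * u⁻¹ := by
    intro j; rw [pow_succ, mul_inv]; field_simp
  have c2 : ∀ j : ℕ, (1 - q ^ j * (u * q)) = 1 - q ^ (j+1) * u := by
    intro j; rw [pow_succ]; ring
  have e3 : (∏' j : ℕ, ((1 - q ^ (j+1) * (u * q)⁻¹) * (1 - q ^ j * (u * q))))
      = (∏' j : ℕ, (1 - q ^ j * u⁻¹)) * ∏' j : ℕ, (1 - q ^ (j+1) * u) := by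
    calc (∏' j : ℕ, ((1 - q ^ (j+1) * (u * q)⁻¹) * (1 - q ^ j * (u * q))))
        = ∏' j : ℕ, ((1 - q ^ j * u⁻¹) * (1 - q ^ (j+1) * u)) :=
          tprod_congr fun j => by rw [c1 j, c2 j]
      _ = (∏' j : ℕ, (1 - q ^ j * u⁻¹)) * ∏' j : ℕ, (1 - q ^ (j+1) * u) :=
          Multipliable.tprod_mul (hM u⁻¹) (hM' u)
  have e4 : (∏' j : ℕ, (1 - q ^ j * u⁻¹)) = (1 - u⁻¹) * ∏' j : ℕ, (1 - q ^ (j+1) * u⁻¹) := by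
    rw [tprod_eq_zero_mul' (f := fun j : ℕ => 1 - q ^ j * u⁻¹) (hM' u⁻¹)]
    norm_num
  rw [e3, e4, e1, e2]
  have h5 : (1 - u⁻¹) = -u⁻¹ * (1 - u) := by field_simp; ring
  rw [h5]; ring

lemma theta0_qp (z τ : ℂ) (hτ : 0 < τ.im) :
    theta0 (z + τ) τ = -(Complex.exp (2 * (Real.pi:ℂ) * I * z))⁻¹ * theta0 z τ := by
  have huq : Complex.exp (2 * (Real.pi:ℂ) * I * (z + τ))
      = Complex.exp (2 * (Real.pi:ℂ) * I * z) * Complex.exp (2 * (Real.pi:ℂ) * I * τ) := by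
    rw [← Complex.exp_add]; ring_nf
  rw [theta0_eq, theta0_eq, huq]
  exact qp_aux _ _ (norm_q_lt_one hτ) (Complex.exp_ne_zero _) (Complex.exp_ne_zero _)

lemma theta0_add_int (z τ : ℂ) (k : ℤ) : theta0 (z + k) τ = theta0 z τ := by
  unfold theta0
  apply tprod_congr; intro j
  have h1 : 2 * (Real.pi:ℂ) * I * (((j:ℂ)+1) * τ - (z + (k:ℂ)))
      = 2 * (Real.pi:ℂ) * I * (((j:ℂ)+1) * τ - z) + ((-k : ℤ) : ℂ) * (2 * (Real.pi:ℂ) * I) := by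
    push_cast; ring
  have h2 : 2 * (Real.pi:ℂ) * I * ((j:ℂ) * τ + (z + (k:ℂ)))
      = 2 * (Real.pi:ℂ) * I * ((j:ℂ) * τ + z) + ((k : ℤ) : ℂ) * (2 * (Real.pi:ℂ) * I) := by
    push_cast; ring
  rw [h1, h2, Complex.exp_add, Complex.exp_add, Complex.exp_int_mul_two_pi_mul_I,
    Complex.exp_int_mul_two_pi_mul_I, mul_one, mul_one]


lemma neg_exp_mul_exp (A B : ℂ) :
    -Complex.exp A * Complex.exp B = Complex.exp ((Real.pi:ℂ) * I + A + B) := by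
  rw [Complex.exp_add, Complex.exp_add, Complex.exp_pi_mul_I]; ring

lemma exp_eq_exp_of (A B : ℂ) (k : ℤ) (h : A = B + (k:ℂ) * (2 * (Real.pi:ℂ) * I)) :
    Complex.exp A = Complex.exp B := by
  rw [h, Complex.exp_add, Complex.exp_int_mul_two_pi_mul_I, mul_one]

lemma theta0_qp_int (τ : ℂ) (hτ : 0 < τ.im) (m : ℤ) (z : ℂ) :
    theta0 (z + (m:ℂ) * τ) τ = Complex.exp (2 * (Real.pi:ℂ) * I *
      ((m:ℂ)/2 - (m:ℂ) * z - (m:ℂ) * ((m:ℂ) - 1)/2 * τ)) * theta0 z τ := by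
  induction m using Int.induction_on generalizing z with
  | zero => norm_num
  | succ n ih =>
    have e2 : z + ((((n:ℤ)+1 : ℤ)):ℂ) * τ = (z + ((n:ℤ):ℂ) * τ) + τ := by push_cast; ring
    rw [e2, theta0_qp _ _ hτ, ih z, ← mul_assoc]
    congr 1
    rw [← Complex.exp_neg, neg_exp_mul_exp]
    apply exp_eq_exp_of _ _ 0
    push_cast; ring
  | pred n ih =>
    have earg : z + (((-(n:ℤ)) : ℤ):ℂ) * τ = (z + (((-(n:ℤ)-1) : ℤ):ℂ) * τ) + τ := by
      push_cast; ring
    have key := theta0_qp (z + (((-(n:ℤ)-1) : ℤ):ℂ) * τ) τ hτ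
    rw [← earg, ih z] at key
    have key2 : theta0 (z + (((-(n:ℤ)-1) : ℤ):ℂ) * τ) τ
        = (-(Complex.exp (2 * (Real.pi:ℂ) * I * (z + (((-(n:ℤ)-1) : ℤ):ℂ) * τ)))⁻¹)⁻¹ *
          (Complex.exp (2 * (Real.pi:ℂ) * I *
            (((-(n:ℤ) : ℤ):ℂ)/2 - ((-(n:ℤ) : ℤ):ℂ) * z -
              ((-(n:ℤ) : ℤ):ℂ) * (((-(n:ℤ) : ℤ):ℂ) - 1)/2 * τ)) * theta0 z τ) := by
      have hB : -(Complex.exp (2 * (Real.pi:ℂ) * I * (z + (((-(n:ℤ)-1) : ℤ):ℂ) * τ)))⁻¹ ≠ 0 := by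
        simp [Complex.exp_ne_zero]
      rw [key, ← mul_assoc, inv_mul_cancel₀ hB, one_mul]
    rw [inv_neg, inv_inv] at key2
    rw [key2, ← mul_assoc, neg_exp_mul_exp]
    congr 1
    apply exp_eq_exp_of _ _ 1
    push_cast; ring

lemma theta0_shift (τ : ℂ) (hτ : 0 < τ.im) (k m : ℤ) (z : ℂ) :
    theta0 (z + (k:ℂ) + (m:ℂ) * τ) τ = Complex.exp (2 * (Real.pi:ℂ) * I *
      ((m:ℂ)/2 - (m:ℂ) * z - (m:ℂ) * ((m:ℂ) - 1)/2 * τ)) * theta0 z τ := by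
  have e : z + (k:ℂ) + (m:ℂ) * τ = (z + (m:ℂ) * τ) + (k:ℂ) := by ring
  rw [e, theta0_add_int, theta0_qp_int τ hτ m z]

noncomputable def sprod (F : ℤ → ℂ) (m : ℤ) : ℂ :=
  if 0 ≤ m then ∏ j ∈ Finset.range m.toNat, F j
  else (∏ j ∈ Finset.range (-m).toNat, F (-(j:ℤ)-1))⁻¹

lemma sprod_succ (F : ℤ → ℂ) (m : ℤ) (hF : F m ≠ 0) :
    sprod F (m+1) = sprod F m * F m := by
  rcases le_or_gt 0 m with hm | hm
  · rw [sprod, if_pos (by omega : (0:ℤ) ≤ m + 1), sprod, if_pos hm]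
    have h : (m+1).toNat = m.toNat + 1 := by omega
    have h2 : ((m.toNat : ℤ)) = m := by omega
    rw [h, Finset.prod_range_succ, h2]
  · have h1 : (-m).toNat = (-(m+1)).toNat + 1 := by omega
    have hc : -(((-(m+1)).toNat : ℤ)) - 1 = m := by omega
    have h2 : sprod F m = ((∏ j ∈ Finset.range (-(m+1)).toNat, F (-(j:ℤ)-1)) * F m)⁻¹ := by
      rw [sprod, if_neg (by omega : ¬ (0:ℤ) ≤ m), h1, Finset.prod_range_succ, hc]
    have h3 : sprod F (m+1) = (∏ j ∈ Finset.range (-(m+1)).toNat, F (-(j:ℤ)-1))⁻¹ := by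
      by_cases h0 : 0 ≤ m + 1
      · have e1 : (m+1).toNat = 0 := by omega
        have e2 : (-(m+1)).toNat = 0 := by omega
        rw [sprod, if_pos h0, e1, e2]
        simp
      · rw [sprod, if_neg h0]
    rw [h3, h2, mul_inv, mul_assoc, inv_mul_cancel₀ hF, mul_one]

lemma sprod_mul (F G : ℤ → ℂ) (m : ℤ) :
    sprod (fun j => F j * G j) m = sprod F m * sprod G m := by
  unfold sprod
  split
  · rw [Finset.prod_mul_distrib]
  · rw [Finset.prod_mul_distrib, mul_inv]

lemma sprod_congr (F G : ℤ → ℂ) (m : ℤ)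
    (h : ∀ j : ℤ, min m 0 ≤ j → j < max m 0 → F j = G j) : sprod F m = sprod G m := by
  rcases le_or_gt 0 m with hm | hm
  · rw [sprod, if_pos hm, sprod, if_pos hm]
    refine Finset.prod_congr rfl fun j hj => ?_
    have := Finset.mem_range.mp hj
    exact h _ (by omega) (by omega)
  · rw [sprod, if_neg (by omega), sprod, if_neg (by omega)]
    congr 1
    refine Finset.prod_congr rfl fun j hj => ?_
    have := Finset.mem_range.mp hj
    exact h _ (by omega) (by omega)

lemma sprod_ne_zero (F : ℤ → ℂ) (m : ℤ) (h : ∀ j, F j ≠ 0) : sprod F m ≠ 0 := by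
  unfold sprod
  split
  · exact Finset.prod_ne_zero_iff.mpr fun j _ => h _
  · exact inv_ne_zero (Finset.prod_ne_zero_iff.mpr fun j _ => h _)

lemma sprod_add (F : ℤ → ℂ) (hF : ∀ j, F j ≠ 0) (m n : ℤ) :
    sprod F (m + n) = sprod F m * sprod (fun j => F (m + j)) n := by
  induction n using Int.induction_on with
  | zero => simp [sprod]
  | succ n ih =>
    have e : m + ((n:ℤ)+1) = (m + n) + 1 := by ring
    rw [e, sprod_succ F (m+n) (hF _), ih, sprod_succ (fun j => F (m+j)) n (hF _), mul_assoc]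
  | pred n ih =>
    have h1 := sprod_succ F (m + (-(n:ℤ)-1)) (hF _)
    rw [show m + (-(n:ℤ)-1) + 1 = m + (-(n:ℤ)) by ring] at h1
    have h1' : sprod F (m + (-(n:ℤ)-1)) = sprod F (m + (-(n:ℤ))) * (F (m + (-(n:ℤ)-1)))⁻¹ := by
      rw [h1, mul_assoc, mul_inv_cancel₀ (hF _), mul_one]
    have h2 := sprod_succ (fun j => F (m+j)) (-(n:ℤ)-1) (hF _)
    rw [show -(n:ℤ)-1 + 1 = -(n:ℤ) by ring] at h2
    have h2' : sprod (fun j => F (m+j)) (-(n:ℤ)-1)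
        = sprod (fun j => F (m+j)) (-(n:ℤ)) * (F (m + (-(n:ℤ)-1)))⁻¹ := by
      rw [h2, mul_assoc, mul_inv_cancel₀ (hF _), mul_one]
    rw [show m + (-(n:ℤ)-1) = m + (-(n:ℤ)-1) from rfl]
    rw [h1', ih, h2']
    ring

lemma sprod_exp (a b : ℂ) (n : ℤ) :
    sprod (fun j => Complex.exp (a + b * (j:ℂ))) n
      = Complex.exp ((n:ℂ) * a + b * ((n:ℂ) * ((n:ℂ)-1)/2)) := by
  induction n using Int.induction_on with
  | zero => norm_num [sprod]
  | succ n ih =>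
    rw [sprod_succ _ _ (Complex.exp_ne_zero _), ih, ← Complex.exp_add]
    congr 1
    push_cast
    ring
  | pred n ih =>
    have h := sprod_succ (fun j => Complex.exp (a + b * (j:ℂ))) (-(n:ℤ)-1) (Complex.exp_ne_zero _)
    rw [show -(n:ℤ)-1 + 1 = -(n:ℤ) by ring] at h
    have h' : sprod (fun j => Complex.exp (a + b * (j:ℂ))) (-(n:ℤ)-1)
        = sprod (fun j => Complex.exp (a + b * (j:ℂ))) (-(n:ℤ))
          * (Complex.exp (a + b * (((-(n:ℤ)-1) : ℤ):ℂ)))⁻¹ := by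
      rw [h, mul_assoc, mul_inv_cancel₀ (Complex.exp_ne_zero _), mul_one]
    rw [h', ih, ← Complex.exp_neg, ← Complex.exp_add]
    congr 1
    push_cast
    ring

lemma DeltaInt_eq_sprod (w A₁ A₂ A₃ : ℂ) (m : ℤ) :
    DeltaInt w A₁ A₂ A₃ m = sprod (fun k => theta0 ((w + (k:ℂ)*A₁)/A₃) (A₂/A₃)) m := by
  unfold DeltaInt sprod
  split
  · exact Finset.prod_congr rfl fun j _ =>
      congrArg (fun z => theta0 z (A₂/A₃)) (by push_cast; ring)
  · exact congrArg Inv.inv <| Finset.prod_congr rfl fun j _ =>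
      congrArg (fun z => theta0 z (A₂/A₃)) (by push_cast; ring)

set_option maxHeartbeats 1000000 in
lemma main_aux (w A₁ A₂ A₃ μx : ℂ) (m₁ m₂ m₃ n₁ : ℤ)
    (hτ : 0 < (A₂/A₃).im) (hA₃ : A₃ ≠ 0)
    (hμx : μx = (m₁:ℂ)*A₁ + (m₂:ℂ)*A₂ + (m₃:ℂ)*A₃)
    (hθ : ∀ j : ℤ, -(|m₁|+|n₁|) ≤ j → j ≤ |m₁|+|n₁| →
      theta0 ((w + (j:ℂ) * A₁) / A₃) (A₂ / A₃) ≠ 0) :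
    DeltaInt w A₁ A₂ A₃ (m₁ + n₁) =
      Complex.exp (2 * (Real.pi : ℂ) * Complex.I *
          (((n₁ : ℂ) * (m₂ : ℂ) / A₃) *
            (w + ((2 * (m₁ : ℂ) + (n₁ : ℂ) - 1) / 2) * A₁ +
              (((m₂ : ℂ) - 1) / 2) * A₂ + A₃ / 2))) *
        DeltaInt w A₁ A₂ A₃ m₁ * DeltaInt (w + μx) A₁ A₂ A₃ n₁ := by
  have hle1 := le_abs_self m₁
  have hle2 := neg_abs_le m₁
  have hle3 := le_abs_self n₁
  have hle4 := neg_abs_le n₁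
  set F : ℤ → ℂ := fun k => theta0 ((w + (k:ℂ)*A₁)/A₃) (A₂/A₃) with hFdef
  set a : ℂ := 2 * (Real.pi:ℂ) * Complex.I *
    ((m₂:ℂ)/2 - (m₂:ℂ)*((w + (m₁:ℂ)*A₁)/A₃) - (m₂:ℂ)*((m₂:ℂ)-1)/2*(A₂/A₃)) with ha
  set b : ℂ := 2 * (Real.pi:ℂ) * Complex.I * (-(m₂:ℂ) * (A₁/A₃)) with hb
  have hshift : ∀ j : ℤ, theta0 ((w + μx + (j:ℂ)*A₁)/A₃) (A₂/A₃)
      = Complex.exp (a + b*(j:ℂ)) * F (m₁ + j) := by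
    intro j
    have harg : (w + μx + (j:ℂ)*A₁)/A₃
        = (w + (((m₁ + j : ℤ)):ℂ)*A₁)/A₃ + ((m₃:ℤ):ℂ) + ((m₂:ℤ):ℂ)*(A₂/A₃) := by
      rw [hμx]; push_cast; field_simp; ring
    rw [harg, theta0_shift (A₂/A₃) hτ m₃ m₂]
    have hFv : F (m₁ + j) = theta0 ((w + (((m₁ + j : ℤ)):ℂ)*A₁)/A₃) (A₂/A₃) := by
      rw [hFdef]
    rw [hFv]
    congr 1
    refine exp_eq_exp_of _ _ 0 ?_
    rw [ha, hb]; push_cast; field_simp; ring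
  have hD1 : DeltaInt w A₁ A₂ A₃ (m₁+n₁) = sprod F (m₁+n₁) :=
    (DeltaInt_eq_sprod w A₁ A₂ A₃ (m₁+n₁)).trans (by rw [hFdef])
  have hD2 : DeltaInt w A₁ A₂ A₃ m₁ = sprod F m₁ :=
    (DeltaInt_eq_sprod w A₁ A₂ A₃ m₁).trans (by rw [hFdef])
  have hD3 : DeltaInt (w + μx) A₁ A₂ A₃ n₁
      = sprod (fun k => theta0 ((w + μx + (k:ℂ)*A₁)/A₃) (A₂/A₃)) n₁ := by
    rw [DeltaInt_eq_sprod]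
  have hnu : sprod (fun k => theta0 ((w + μx + (k:ℂ)*A₁)/A₃) (A₂/A₃)) n₁
      = Complex.exp ((n₁:ℂ)*a + b*((n₁:ℂ)*((n₁:ℂ)-1)/2)) * sprod (fun j => F (m₁+j)) n₁ := by
    have e1 : sprod (fun k => theta0 ((w + μx + (k:ℂ)*A₁)/A₃) (A₂/A₃)) n₁
        = sprod (fun j => Complex.exp (a + b*(j:ℂ)) * F (m₁+j)) n₁ :=
      sprod_congr _ _ _ (fun j _ _ => hshift j)
    rw [e1, sprod_mul, sprod_exp]
  set Ft : ℤ → ℂ := fun j => if -(|m₁|+|n₁|) ≤ j ∧ j ≤ |m₁|+|n₁| then F j else 1 with hFtdef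
  have hFt0 : ∀ j, Ft j ≠ 0 := by
    intro j
    simp only [hFtdef]
    split_ifs with h
    · simp only [hFdef]
      exact hθ j h.1 h.2
    · exact one_ne_zero
  have hc1 : sprod F (m₁+n₁) = sprod Ft (m₁+n₁) :=
    sprod_congr _ _ _ (fun j hj1 hj2 => by
      simp only [hFtdef]; rw [if_pos ⟨by omega, by omega⟩])
  have hc2 : sprod F m₁ = sprod Ft m₁ :=
    sprod_congr _ _ _ (fun j hj1 hj2 => by
      simp only [hFtdef]; rw [if_pos ⟨by omega, by omega⟩])
  have hc3 : sprod (fun j => F (m₁+j)) n₁ = sprod (fun j => Ft (m₁+j)) n₁ :=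
    sprod_congr _ _ _ (fun j hj1 hj2 => by
      simp only [hFtdef]; rw [if_pos ⟨by omega, by omega⟩])
  have hco := sprod_add Ft hFt0 m₁ n₁
  have hone : Complex.exp (2 * (Real.pi : ℂ) * Complex.I *
          (((n₁ : ℂ) * (m₂ : ℂ) / A₃) *
            (w + ((2 * (m₁ : ℂ) + (n₁ : ℂ) - 1) / 2) * A₁ +
              (((m₂ : ℂ) - 1) / 2) * A₂ + A₃ / 2))) *
        Complex.exp ((n₁:ℂ)*a + b*((n₁:ℂ)*((n₁:ℂ)-1)/2)) = 1 := by
    rw [← Complex.exp_add]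
    refine (exp_eq_exp_of _ 0 (n₁*m₂) ?_).trans Complex.exp_zero
    rw [ha, hb]
    push_cast
    field_simp
    ring
  rw [hD1, hD2, hD3, hnu, hc1, hc2, hc3, hco]
  linear_combination (-(sprod Ft m₁ * sprod (fun j => Ft (m₁ + j)) n₁)) * hone

end Statement8Aux

/-- the cocycle identity
`Δ_a(μ+ν;w,x) = e^{2πi P_a(μ,ν;w,x)} Δ_a(μ;w,x) Δ_a(ν;w+μ(x),x)`. -/
theorem statement8 (a : V) (ha : Primitive a) (α₁ α₂ α₃ : V)
    (hfr : IsFraming a α₁ α₂ α₃)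
    (x : Fin 3 → ℂ) (hx : 0 < (pairZ α₂ x / pairZ α₃ x).im) (w : ℂ)
    (m₁ m₂ m₃ n₁ n₂ n₃ : ℤ)
    (μ ν : V) (hμ : μ = m₁ • α₁ + m₂ • α₂ + m₃ • α₃) (hν : ν = n₁ • α₁ + n₂ • α₂ + n₃ • α₃)
    (hθ : ∀ j : ℤ, -(|m₁| + |n₁|) ≤ j → j ≤ |m₁| + |n₁| →
      theta0 ((w + (j : ℂ) * pairZ α₁ x) / pairZ α₃ x) (pairZ α₂ x / pairZ α₃ x) ≠ 0 ∧
      theta0 ((w + pairZ μ x + (j : ℂ) * pairZ α₁ x) / pairZ α₃ x)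
        (pairZ α₂ x / pairZ α₃ x) ≠ 0) :
    DeltaInt w (pairZ α₁ x) (pairZ α₂ x) (pairZ α₃ x) (m₁ + n₁) =
      Complex.exp (2 * (Real.pi : ℂ) * Complex.I *
          (((n₁ : ℂ) * (m₂ : ℂ) / pairZ α₃ x) *
            (w + ((2 * (m₁ : ℂ) + (n₁ : ℂ) - 1) / 2) * pairZ α₁ x +
              (((m₂ : ℂ) - 1) / 2) * pairZ α₂ x + pairZ α₃ x / 2))) *
        DeltaInt w (pairZ α₁ x) (pairZ α₂ x) (pairZ α₃ x) m₁ *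
        DeltaInt (w + pairZ μ x) (pairZ α₁ x) (pairZ α₂ x) (pairZ α₃ x) n₁ := by
  have hA₃ : pairZ α₃ x ≠ 0 := by
    intro h
    rw [h, div_zero] at hx
    simp at hx
  have hμx : pairZ μ x = (m₁:ℂ) * pairZ α₁ x + (m₂:ℂ) * pairZ α₂ x + (m₃:ℂ) * pairZ α₃ x := by
    subst hμ
    simp only [pairZ, Pi.add_apply, Pi.smul_apply, smul_eq_mul]
    push_cast
    ring
  exact main_aux w (pairZ α₁ x) (pairZ α₂ x) (pairZ α₃ x) (pairZ μ x) m₁ m₂ m₃ n₁ hx hA₃ hμx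
    (fun j h1 h2 => (hθ j h1 h2).1)

end EGG
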